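/- Let p ∈ ℕ, let Γ = {0,1}^p, let π : Γ → (0,∞) and S : Γ → (0,∞), and let w_A, w_R, w_S : {0,…,p} → [0,1]. For a move type m ∈ {A,R,S}, let m′ denote its paired backward move, where A′ = R, R′ = A, S′ = S. For γ ∈ Γ with N_m(γ) nonempty, define T_m(γ, γ′) = S(γ′)/Σ_{γ̃∈N_m(γ)} S(γ̃) if γ′ ∈ N_m(γ) and T_m(γ, γ′) = 0 otherwise. For γ ≠ γ′ define the pRNS off-diagonal transition probability A(γ, γ′) as the sum over those m ∈ {A,R,S} with γ′ ∈ N_m(γ) and w_m(|γ|) > 0 of w_m(|γ|) T_m(γ, γ′) · min{1, π(γ′) w_{m′}(|γ′|) T_{m′}(γ′, γ) / (π(γ) w_m(|γ|) T_m(γ, γ′))}. Then for all γ ≠ γ′, the detailed balance condition π(γ) A(γ, γ′) = π(γ′) A(γ′, γ) holds. -/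

import Mathlib

/-- The three move types of the pRNS sampler. -/
inductive Move
  | A | R | S
deriving DecidableEq

instance instFintypeMove : Fintype Move :=
  ⟨{.A, .R, .S}, fun m => by cases m <;> simp⟩

/-- The paired backward move: `A′ = R`, `R′ = A`, `S′ = S`. -/
def Move.pair : Move → Move
  | .A => .R
  | .R => .A
  | .S => .S

/-- The size `|γ|` of an inclusion vector: the number of active coordinates. -/
def gsize {p : ℕ} (γ : Fin p → Bool) : ℕ :=
  (Finset.univ.filter fun i => γ i = true).card

open Classical in
/-- The add, remove and swap neighborhoods `N_m(γ)`. -/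
noncomputable def Nmove {p : ℕ} : Move → (Fin p → Bool) → Finset (Fin p → Bool)
  | .A, γ => Finset.univ.filter fun γ' => ∃ j, γ j = false ∧ γ' = Function.update γ j true
  | .R, γ => Finset.univ.filter fun γ' => ∃ j, γ j = true ∧ γ' = Function.update γ j false
  | .S, γ => Finset.univ.filter fun γ' => ∃ j k, γ j = true ∧ γ k = false ∧
      γ' = Function.update (Function.update γ j false) k true

open Classical in
/-- The pRNS proposal transition function restricted to `N_m(γ)`:
`T_m(γ, γ′) = S(γ′)/Σ_{γ̃∈N_m(γ)} S(γ̃)` for `γ′ ∈ N_m(γ)` and `0` otherwise. -/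
noncomputable def Tmove {p : ℕ} (S : (Fin p → Bool) → ℝ) (m : Move)
    (γ γ' : Fin p → Bool) : ℝ :=
  if γ' ∈ Nmove m γ then S γ' / ∑ x ∈ Nmove m γ, S x else 0

open Classical in
/-- The off-diagonal pRNS transition probability `A(γ, γ′)` for `γ ≠ γ′`: the sum over
move types `m` with `γ′ ∈ N_m(γ)` and `w_m(|γ|) > 0` of
`w_m(|γ|) T_m(γ,γ′) min{1, π(γ′) w_{m′}(|γ′|) T_{m′}(γ′,γ) / (π(γ) w_m(|γ|) T_m(γ,γ′))}`. -/
noncomputable def Atrans {p : ℕ} (pr S : (Fin p → Bool) → ℝ) (w : Move → ℕ → ℝ)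
    (γ γ' : Fin p → Bool) : ℝ :=
  ∑ m : Move,
    if γ' ∈ Nmove m γ ∧ 0 < w m (gsize γ) then
      w m (gsize γ) * Tmove S m γ γ' *
        min 1 (pr γ' * (w m.pair (gsize γ') * Tmove S m.pair γ' γ) /
               (pr γ * (w m (gsize γ) * Tmove S m γ γ')))
    else 0

lemma Move.pair_pair (m : Move) : m.pair.pair = m := by cases m <;> rfl

lemma mem_Nmove_pair {p : ℕ} {m : Move} {γ γ' : Fin p → Bool} :
    γ' ∈ Nmove m γ ↔ γ ∈ Nmove m.pair γ' := by
  cases m <;> simp only [Nmove, Move.pair, Finset.mem_filter, Finset.mem_univ, true_and]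
  · constructor
    · rintro ⟨j, hj, rfl⟩
      refine ⟨j, by simp, ?_⟩
      funext i
      rcases eq_or_ne i j with rfl | hij
      · simp [Function.update, hj]
      · simp [Function.update, hij]
    · rintro ⟨j, hj, rfl⟩
      refine ⟨j, by simp, ?_⟩
      funext i
      rcases eq_or_ne i j with rfl | hij
      · simp [Function.update, hj]
      · simp [Function.update, hij]
  · constructor
    · rintro ⟨j, hj, rfl⟩
      refine ⟨j, by simp, ?_⟩
      funext i
      rcases eq_or_ne i j with rfl | hij
      · simp [Function.update, hj]
      · simp [Function.update, hij]
    · rintro ⟨j, hj, rfl⟩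
      refine ⟨j, by simp, ?_⟩
      funext i
      rcases eq_or_ne i j with rfl | hij
      · simp [Function.update, hj]
      · simp [Function.update, hij]
  · constructor
    · rintro ⟨j, k, hj, hk, rfl⟩
      have hjk : j ≠ k := fun e => by rw [e, hk] at hj; exact Bool.noConfusion hj
      refine ⟨k, j, by simp [Function.update], by simp [Function.update, hjk, hjk.symm, hj], ?_⟩
      funext i
      rcases eq_or_ne i j with rfl | hij
      · simp [Function.update, hjk, hj]
      · rcases eq_or_ne i k with rfl | hik
        · simp [Function.update, hk, hij]
        · simp [Function.update, hij, hik]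
    · rintro ⟨j, k, hj, hk, rfl⟩
      have hjk : j ≠ k := fun e => by rw [e, hk] at hj; exact Bool.noConfusion hj
      refine ⟨k, j, by simp [Function.update], by simp [Function.update, hjk, hjk.symm, hj], ?_⟩
      funext i
      rcases eq_or_ne i j with rfl | hij
      · simp [Function.update, hjk, hj]
      · rcases eq_or_ne i k with rfl | hik
        · simp [Function.update, hk, hij]
        · simp [Function.update, hij, hik]

lemma Tmove_pos {p : ℕ} {S : (Fin p → Bool) → ℝ} (hS : ∀ γ, 0 < S γ) {m : Move}
    {γ γ' : Fin p → Bool} (hmem : γ' ∈ Nmove m γ) : 0 < Tmove S m γ γ' := by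
  rw [Tmove, if_pos hmem]
  exact div_pos (hS γ') (Finset.sum_pos (fun x _ => hS x) ⟨γ', hmem⟩)

/-- Lemma 1: the paired-move reversible neighborhood sampler (pRNS) satisfies the
detailed balance condition `π(γ) A(γ, γ′) = π(γ′) A(γ′, γ)` for all `γ ≠ γ′`. -/
theorem pRNS_detailed_balance {p : ℕ} (pr S : (Fin p → Bool) → ℝ)
    (hpr : ∀ γ, 0 < pr γ) (hS : ∀ γ, 0 < S γ)
    (w : Move → ℕ → ℝ) (hw0 : ∀ m k, 0 ≤ w m k) (hw1 : ∀ m k, w m k ≤ 1)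
    (γ γ' : Fin p → Bool) (h : γ ≠ γ') :
    pr γ * Atrans pr S w γ γ' = pr γ' * Atrans pr S w γ' γ := by
  rw [Atrans, Atrans, Finset.mul_sum, Finset.mul_sum]
  refine Fintype.sum_bijective Move.pair
    (Function.Involutive.bijective Move.pair_pair) _ _ (fun m => ?_)
  by_cases hmem : γ' ∈ Nmove m γ
  · have hmem' : γ ∈ Nmove m.pair γ' := mem_Nmove_pair.mp hmem
    have hT : 0 < Tmove S m γ γ' := Tmove_pos hS hmem
    have hT' : 0 < Tmove S m.pair γ' γ := Tmove_pos hS hmem'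
    rcases lt_or_eq_of_le (hw0 m (gsize γ)) with hw | hw
    · rcases lt_or_eq_of_le (hw0 m.pair (gsize γ')) with hw' | hw'
      · -- both weights positive
        rw [if_pos ⟨hmem, hw⟩, if_pos ⟨hmem', hw'⟩, Move.pair_pair]
        have hx : 0 < pr γ * (w m (gsize γ) * Tmove S m γ γ') :=
          mul_pos (hpr γ) (mul_pos hw hT)
        have hy : 0 < pr γ' * (w m.pair (gsize γ') * Tmove S m.pair γ' γ) :=
          mul_pos (hpr γ') (mul_pos hw' hT')
        have key : ∀ c a y : ℝ, 0 < c → 0 < a → c * (a * min 1 (y / (c * a))) = min (c * a) y := by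
          intro c a y hc ha
          rw [← mul_assoc, mul_min_of_nonneg _ _ (mul_pos hc ha).le, mul_one,
            mul_div_cancel₀ _ (mul_pos hc ha).ne']
        rw [key _ _ _ (hpr γ) (mul_pos hw hT), key _ _ _ (hpr γ') (mul_pos hw' hT'), min_comm]
      · -- w m.pair (gsize γ') = 0
        rw [if_pos ⟨hmem, hw⟩, if_neg (fun hc => by rw [← hw'] at hc; exact lt_irrefl _ hc.2),
          ← hw']
        simp
    · -- w m (gsize γ) = 0
      rw [if_neg (fun hc => by rw [← hw] at hc; exact lt_irrefl _ hc.2)]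
      by_cases hc' : γ ∈ Nmove m.pair γ' ∧ 0 < w m.pair (gsize γ')
      · rw [if_pos hc', Move.pair_pair, ← hw]
        simp
      · rw [if_neg hc', mul_zero, mul_zero]
  · rw [if_neg (fun hc => hmem hc.1),
      if_neg (fun hc => hmem (mem_Nmove_pair.mpr hc.1)), mul_zero, mul_zero]
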